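/- In the setting above, the bilinear pairing on primitive vectors ⟨a,b⟩^prim_m := L(f^{m-1}·a·b) on P_m × P_m is symmetric, and it is nondegenerate on P_m; it equals the pullback under the isomorphism M_f^{m-1} : P_m → K_m/K_{m+1} of the induced order-m form on K_m/K_{m+1}. -/

import Mathlib

open Module in
private lemma aux_finrank_biSup_le {V : Type*} [AddCommGroup V] [Module ℝ V]
    [FiniteDimensional ℝ V] (s : Finset ℕ) (W : ℕ → Submodule ℝ V) :
    finrank ℝ ↥(⨆ j ∈ s, W j) ≤ ∑ j ∈ s, finrank ℝ ↥(W j) := by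
  classical
  induction s using Finset.induction_on with
  | empty => simp
  | insert a s ha ih =>
    rw [Finset.sum_insert ha, Finset.iSup_insert]
    have h := Submodule.finrank_sup_add_finrank_inf_eq (W a) (⨆ j ∈ s, W j)
    omega

open Module in
private lemma aux_sum_finrank_le_biSup {V : Type*} [AddCommGroup V] [Module ℝ V]
    [FiniteDimensional ℝ V] (s : Finset ℕ) (W : ℕ → Submodule ℝ V)
    (hdis : ∀ j ∈ s, Disjoint (W j) (⨆ i ∈ s.erase j, W i)) :
    ∑ j ∈ s, finrank ℝ ↥(W j) ≤ finrank ℝ ↥(⨆ j ∈ s, W j) := by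
  classical
  induction s using Finset.induction_on with
  | empty => simp
  | insert a s ha ih =>
    rw [Finset.sum_insert ha, Finset.iSup_insert]
    have hd : Disjoint (W a) (⨆ i ∈ s, W i) := by
      have h := hdis a (Finset.mem_insert_self a s)
      rwa [Finset.erase_insert ha] at h
    have h := Submodule.finrank_sup_add_finrank_inf_eq (W a) (⨆ j ∈ s, W j)
    rw [hd.eq_bot, finrank_bot] at h
    have ih' := ih (fun j hj => (hdis j (Finset.mem_insert_of_mem hj)).mono_right
      (biSup_mono (fun i hi => Finset.mem_of_subset
        (Finset.erase_subset_erase _ (Finset.subset_insert a s)) hi)))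
    omega

open Module in
/-- The main content: nondegeneracy of the primitive pairing on `P n` (paper's `P_{n+1}`). -/
private lemma aux_nondegenerate (A : Type*) [CommRing A] [Algebra ℝ A] [FiniteDimensional ℝ A]
    (L : A →ₗ[ℝ] ℝ) (hnd : ∀ a : A, (∀ b : A, L (a * b) = 0) → a = 0)
    (f : A) (ℓ : ℕ)
    (P : ℕ → Submodule ℝ A)
    (hP1 : ∀ j, ∀ v ∈ P j, f ^ (j + 1) * v = 0)
    (hP2 : ∀ j, ∀ v ∈ P j, f ^ j * v = 0 → v = 0)
    (hPtop : ∀ j, ℓ < j → P j = ⊥)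
    (hind : iSupIndep (fun p : {q : ℕ × ℕ // q.2 ≤ q.1 ∧ q.1 ≤ ℓ} =>
      Submodule.map (LinearMap.mulLeft ℝ (f ^ p.1.2)) (P p.1.1)))
    (hsup : (⨆ p : {q : ℕ × ℕ // q.2 ≤ q.1 ∧ q.1 ≤ ℓ},
      Submodule.map (LinearMap.mulLeft ℝ (f ^ p.1.2)) (P p.1.1)) = ⊤)
    (n : ℕ) :
    (∀ a ∈ P n, (∀ b ∈ P n, L (f ^ n * a * b) = 0) → a = 0) := by
  classical
  intro a ha hperp
  by_cases hnℓ : n ≤ ℓ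
  swap
  · have hPn : P n = ⊥ := hPtop n (by omega)
    rw [hPn] at ha; simpa using ha
  -- the bilinear form
  set B : LinearMap.BilinForm ℝ A := (LinearMap.mul ℝ A).compr₂ L with hBdef
  have hBapp : ∀ x y : A, B x y = L (x * y) := fun x y => rfl
  have hsymm : B.IsSymm := ⟨fun x y => by simp only [RingHom.id_apply, hBapp, mul_comm]⟩
  have hrefl : B.IsRefl := hsymm.isRefl
  have hBnd : B.Nondegenerate := ⟨fun x hx => hnd x (fun b => hx b),
    fun y hy => hnd y (fun b => by rw [mul_comm, ← hBapp]; exact hy b)⟩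
  -- submodules
  set fA : Submodule ℝ A := LinearMap.range (LinearMap.mulLeft ℝ f) with hfA
  set An : Submodule ℝ A := LinearMap.ker (LinearMap.mulLeft ℝ (f ^ n)) with hAn
  set V : Submodule ℝ A := fA ⊔ An ⊔ P n with hV
  set K : Submodule ℝ A := LinearMap.ker (LinearMap.mulLeft ℝ f) ⊓
    LinearMap.range (LinearMap.mulLeft ℝ (f ^ (n + 1))) with hK
  set D : Submodule ℝ A := ⨆ j ∈ Finset.Icc (n + 1) ℓ, P j with hD
  -- u := f^n * a
  set u : A := f ^ n * a with hu
  have hfu : f * u = 0 := by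
    have h1 := hP1 n a ha
    have h2 : f * u = f ^ (n + 1) * a := by rw [hu]; ring
    rw [h2, h1]
  -- u is orthogonal to V
  have huV : u ∈ B.orthogonal V := by
    rw [LinearMap.BilinForm.mem_orthogonal_iff]
    intro y hy
    rw [hV] at hy
    rcases Submodule.mem_sup.mp hy with ⟨y₁, hy₁, p, hp, rfl⟩
    rcases Submodule.mem_sup.mp hy₁ with ⟨z, hz, w, hw, rfl⟩
    rcases hz with ⟨t, rfl⟩
    have hwn : f ^ n * w = 0 := hw
    have e1 : B (LinearMap.mulLeft ℝ f t) u = 0 := by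
      rw [hBapp, LinearMap.mulLeft_apply]
      have h : f * t * u = t * (f * u) := by ring
      rw [h, hfu, mul_zero, map_zero]
    have e2 : B w u = 0 := by
      rw [hBapp, hu]
      have h : w * (f ^ n * a) = (f ^ n * w) * a := by ring
      rw [h, hwn, zero_mul, map_zero]
    have e3 : B p u = 0 := by
      rw [hBapp, hu]
      have h : p * (f ^ n * a) = f ^ n * a * p := by ring
      rw [h]
      exact hperp p hp
    show B (LinearMap.mulLeft ℝ f t + w + p) u = 0
    rw [map_add, map_add, LinearMap.add_apply, LinearMap.add_apply, e1, e2, e3]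
    ring
  -- K ≤ orthogonal V
  have hKV : K ≤ B.orthogonal V := by
    rintro x ⟨hx1, z, rfl⟩
    have hx1' : f * (LinearMap.mulLeft ℝ (f ^ (n + 1)) z) = 0 := hx1
    rw [LinearMap.mulLeft_apply] at hx1' ⊢
    rw [LinearMap.BilinForm.mem_orthogonal_iff]
    intro y hy
    rw [hV] at hy
    rcases Submodule.mem_sup.mp hy with ⟨y₁, hy₁, p, hp, rfl⟩
    rcases Submodule.mem_sup.mp hy₁ with ⟨w₁, hw₁, w₂, hw₂, rfl⟩
    rcases hw₁ with ⟨t, rfl⟩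
    have hw₂n : f ^ n * w₂ = 0 := hw₂
    have e1 : B (LinearMap.mulLeft ℝ f t) (f ^ (n + 1) * z) = 0 := by
      rw [hBapp, LinearMap.mulLeft_apply]
      have h : f * t * (f ^ (n + 1) * z) = t * (f * (f ^ (n + 1) * z)) := by ring
      rw [h, hx1', mul_zero, map_zero]
    have e2 : B w₂ (f ^ (n + 1) * z) = 0 := by
      rw [hBapp]
      have h : w₂ * (f ^ (n + 1) * z) = (f ^ n * w₂) * (f * z) := by ring
      rw [h, hw₂n, zero_mul, map_zero]
    have e3 : B p (f ^ (n + 1) * z) = 0 := by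
      rw [hBapp]
      have h : p * (f ^ (n + 1) * z) = (f ^ (n + 1) * p) * z := by ring
      rw [h, hP1 n p hp, zero_mul, map_zero]
    show B (LinearMap.mulLeft ℝ f t + w₂ + p) (f ^ (n + 1) * z) = 0
    rw [map_add, map_add, LinearMap.add_apply, LinearMap.add_apply, e1, e2, e3]
    ring
  -- V ⊔ D = ⊤
  have htop : V ⊔ D = ⊤ := by
    rw [eq_top_iff, ← hsup]
    refine iSup_le ?_
    rintro ⟨⟨j, k⟩, hkj, hjℓ⟩
    rintro x ⟨v, hv, rfl⟩
    simp only [LinearMap.mulLeft_apply]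
    rw [hV]
    rcases Nat.eq_zero_or_pos k with hk0 | hk1
    · subst hk0
      rw [pow_zero, one_mul]
      rcases lt_trichotomy j n with hj | hj | hj
      · have hvn : f ^ n * v = 0 := by
          have h1 := hP1 j v hv
          have h2 : f ^ n * v = f ^ (n - (j + 1)) * (f ^ (j + 1) * v) := by
            rw [← mul_assoc, ← pow_add]
            congr 2
            omega
          rw [h2, h1, mul_zero]
        refine Submodule.mem_sup_left (Submodule.mem_sup_left (Submodule.mem_sup_right ?_))
        rw [hAn]
        exact hvn
      · subst hj
        exact Submodule.mem_sup_left (Submodule.mem_sup_right hv)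
      · refine Submodule.mem_sup_right ?_
        rw [hD]
        exact le_iSup₂ (f := fun j _ => P j) j (Finset.mem_Icc.mpr ⟨by omega, hjℓ⟩) hv
    · refine Submodule.mem_sup_left (Submodule.mem_sup_left (Submodule.mem_sup_left ?_))
      rw [hfA]
      refine ⟨f ^ (k - 1) * v, ?_⟩
      rw [LinearMap.mulLeft_apply, ← mul_assoc, ← pow_succ']
      congr 2
      omega
  -- dimension bookkeeping
  have h1 : finrank ℝ ↥(V ⊔ D) = finrank ℝ A := by rw [htop, finrank_top]
  have h2 := Submodule.finrank_sup_add_finrank_inf_eq V D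
  have h3 : finrank ℝ ↥D ≤ ∑ j ∈ Finset.Icc (n + 1) ℓ, finrank ℝ ↥(P j) := by
    rw [hD]; exact aux_finrank_biSup_le _ _
  have h4 : ∀ j ∈ Finset.Icc (n + 1) ℓ, finrank ℝ ↥(P j) =
      finrank ℝ ↥(Submodule.map (LinearMap.mulLeft ℝ (f ^ j)) (P j)) := by
    intro j _
    have hinj : Function.Injective ((LinearMap.mulLeft ℝ (f ^ j)).comp (P j).subtype) := by
      rw [← LinearMap.ker_eq_bot, Submodule.eq_bot_iff]
      rintro ⟨x, hx⟩ hker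
      have hx0 : f ^ j * x = 0 := hker
      have := hP2 j x hx hx0
      simp [this]
    have h := LinearMap.finrank_range_of_inj hinj
    rw [LinearMap.range_comp, Submodule.range_subtype] at h
    exact h.symm
  have hdisj' : ∀ j ∈ Finset.Icc (n + 1) ℓ,
      Disjoint (Submodule.map (LinearMap.mulLeft ℝ (f ^ j)) (P j))
        (⨆ i ∈ (Finset.Icc (n + 1) ℓ).erase j,
          Submodule.map (LinearMap.mulLeft ℝ (f ^ i)) (P i)) := by
    intro j hj
    have hjℓ : j ≤ ℓ := (Finset.mem_Icc.mp hj).2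
    have hd := hind ⟨(j, j), le_refl j, hjℓ⟩
    refine hd.mono_right ?_
    refine iSup₂_le fun i hi => ?_
    have hiℓ : i ≤ ℓ := (Finset.mem_Icc.mp (Finset.mem_of_mem_erase hi)).2
    have hne : (⟨(i, i), le_refl i, hiℓ⟩ : {q : ℕ × ℕ // q.2 ≤ q.1 ∧ q.1 ≤ ℓ}) ≠
        ⟨(j, j), le_refl j, hjℓ⟩ := by
      have := Finset.ne_of_mem_erase hi
      simp only [ne_eq, Subtype.mk.injEq, Prod.mk.injEq]
      tauto
    exact le_iSup₂ (f := fun p (_ : p ≠ ⟨(j, j), le_refl j, hjℓ⟩) =>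
      Submodule.map (LinearMap.mulLeft ℝ (f ^ p.1.2)) (P p.1.1))
      (⟨(i, i), le_refl i, hiℓ⟩ : {q : ℕ × ℕ // q.2 ≤ q.1 ∧ q.1 ≤ ℓ}) hne
  have h5 : ∑ j ∈ Finset.Icc (n + 1) ℓ,
      finrank ℝ ↥(Submodule.map (LinearMap.mulLeft ℝ (f ^ j)) (P j)) ≤
      finrank ℝ ↥(⨆ j ∈ Finset.Icc (n + 1) ℓ,
        Submodule.map (LinearMap.mulLeft ℝ (f ^ j)) (P j)) :=
    aux_sum_finrank_le_biSup _ _ hdisj'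
  have h6 : (⨆ j ∈ Finset.Icc (n + 1) ℓ,
      Submodule.map (LinearMap.mulLeft ℝ (f ^ j)) (P j)) ≤ K := by
    refine iSup₂_le fun j hj => ?_
    obtain ⟨hj1, hj2⟩ := Finset.mem_Icc.mp hj
    rintro x ⟨v, hv, rfl⟩
    rw [hK]
    simp only [LinearMap.mulLeft_apply]
    constructor
    · show f * (f ^ j * v) = 0
      have h : f * (f ^ j * v) = f ^ (j + 1) * v := by ring
      rw [h, hP1 j v hv]
    · refine ⟨f ^ (j - (n + 1)) * v, ?_⟩
      show f ^ (n + 1) * (f ^ (j - (n + 1)) * v) = f ^ j * v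
      rw [← mul_assoc, ← pow_add]
      congr 2
      omega
  have h6' := Submodule.finrank_mono h6
  have h7 := LinearMap.BilinForm.finrank_orthogonal hBnd V
  have h8 : finrank ℝ ↥V ≤ finrank ℝ A := V.finrank_le
  have hsum : ∑ j ∈ Finset.Icc (n + 1) ℓ, finrank ℝ ↥(P j) =
      ∑ j ∈ Finset.Icc (n + 1) ℓ,
        finrank ℝ ↥(Submodule.map (LinearMap.mulLeft ℝ (f ^ j)) (P j)) :=
    Finset.sum_congr rfl h4
  have hfr : finrank ℝ ↥(B.orthogonal V) ≤ finrank ℝ ↥K := by omega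
  have hKeq : K = B.orthogonal V := Submodule.eq_of_le_of_finrank_le hKV hfr
  -- u ∈ K, hence u ∈ f^(n+1)·A
  have huK : u ∈ K := hKeq ▸ huV
  rw [hK] at huK
  obtain ⟨-, z, hz⟩ := huK
  -- final independence step
  set p0 : {q : ℕ × ℕ // q.2 ≤ q.1 ∧ q.1 ≤ ℓ} := ⟨(n, n), le_refl n, hnℓ⟩ with hp0
  have hu1 : u ∈ Submodule.map (LinearMap.mulLeft ℝ (f ^ n)) (P n) := ⟨a, ha, rfl⟩
  have hrange : LinearMap.range (LinearMap.mulLeft ℝ (f ^ (n + 1))) ≤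
      ⨆ (p) (_ : p ≠ p0), Submodule.map (LinearMap.mulLeft ℝ (f ^ p.1.2)) (P p.1.1) := by
    rw [← Submodule.map_top, ← hsup, Submodule.map_iSup]
    apply iSup_le
    rintro ⟨⟨j, k⟩, hkj, hjℓ⟩
    rintro x ⟨y, ⟨v, hv, rfl⟩, rfl⟩
    simp only [LinearMap.mulLeft_apply]
    by_cases hcase : n + 1 + k ≤ j
    · have hx : f ^ (n + 1) * (f ^ k * v) = f ^ (n + 1 + k) * v := by
        rw [← mul_assoc, ← pow_add]
      rw [hx]
      have hne : (⟨(j, n + 1 + k), hcase, hjℓ⟩ : {q : ℕ × ℕ // q.2 ≤ q.1 ∧ q.1 ≤ ℓ}) ≠ p0 := by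
        rw [hp0]
        simp only [ne_eq, Subtype.mk.injEq, Prod.mk.injEq]
        omega
      exact le_iSup₂ (f := fun p (_ : p ≠ p0) =>
        Submodule.map (LinearMap.mulLeft ℝ (f ^ p.1.2)) (P p.1.1))
        (⟨(j, n + 1 + k), hcase, hjℓ⟩ : {q : ℕ × ℕ // q.2 ≤ q.1 ∧ q.1 ≤ ℓ}) hne ⟨v, hv, rfl⟩
    · have hx : f ^ (n + 1) * (f ^ k * v) = 0 := by
        have h : f ^ (n + 1) * (f ^ k * v) =
            f ^ (n + 1 + k - (j + 1)) * (f ^ (j + 1) * v) := by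
          rw [← mul_assoc, ← mul_assoc, ← pow_add, ← pow_add]
          congr 2
          omega
        rw [h, hP1 j v hv, mul_zero]
      rw [hx]
      exact zero_mem _
  have hu2 : u ∈ ⨆ (p) (_ : p ≠ p0),
      Submodule.map (LinearMap.mulLeft ℝ (f ^ p.1.2)) (P p.1.1) := hrange ⟨z, hz⟩
  have hu0 : u = 0 := Submodule.disjoint_def.mp (hind p0) u hu1 hu2
  exact hP2 n a ha hu0

/-- The primitive pairing `⟨a,b⟩^prim_m = L (f^{m-1}·a·b)` on the primitive subspace `P_m`
(with `P j` here the paper's `P_{j+1}`) is symmetric and nondegenerate, and it is the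
pullback under `v ↦ f^{m-1}·v` of the order-`m` form `⟨a,a'⟩_m = L ((a / f^{m-1})·a')`
on `K_m / K_{m+1}`. -/
theorem stmt_11 (A : Type*) [CommRing A] [Algebra ℝ A] [FiniteDimensional ℝ A]
    (L : A →ₗ[ℝ] ℝ) (hnd : ∀ a : A, (∀ b : A, L (a * b) = 0) → a = 0)
    (f : A) (ℓ : ℕ) (hf : f ^ (ℓ + 1) = 0)
    (P : ℕ → Submodule ℝ A)
    (hP1 : ∀ j, ∀ v ∈ P j, f ^ (j + 1) * v = 0)
    (hP2 : ∀ j, ∀ v ∈ P j, f ^ j * v = 0 → v = 0)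
    (hPtop : ∀ j, ℓ < j → P j = ⊥)
    (hind : iSupIndep (fun p : {q : ℕ × ℕ // q.2 ≤ q.1 ∧ q.1 ≤ ℓ} =>
      Submodule.map (LinearMap.mulLeft ℝ (f ^ p.1.2)) (P p.1.1)))
    (hsup : (⨆ p : {q : ℕ × ℕ // q.2 ≤ q.1 ∧ q.1 ≤ ℓ},
      Submodule.map (LinearMap.mulLeft ℝ (f ^ p.1.2)) (P p.1.1)) = ⊤)
    (m : ℕ) (hm : 1 ≤ m) :
    (∀ a ∈ P (m - 1), ∀ b ∈ P (m - 1),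
      L (f ^ (m - 1) * a * b) = L (f ^ (m - 1) * b * a)) ∧
    (∀ a ∈ P (m - 1), (∀ b ∈ P (m - 1), L (f ^ (m - 1) * a * b) = 0) → a = 0) ∧
    (∀ a ∈ P (m - 1), ∀ b ∈ P (m - 1), ∀ c : A,
      c * f ^ (m - 1) = f ^ (m - 1) * a →
      L (c * (f ^ (m - 1) * b)) = L (f ^ (m - 1) * a * b)) := by
  refine ⟨?_, ?_, ?_⟩
  · intro a _ b _
    congr 1
    ring
  · exact aux_nondegenerate A L hnd f ℓ P hP1 hP2 hPtop hind hsup (m - 1)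
  · intro a _ b _ c hc
    rw [← mul_assoc, hc]
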